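/- Let μ be a translation-invariant percolation on ℤ². Then μ-almost surely, the number of infinite clusters of G_η whose vertex sets have second coordinates bounded below is either 0 or infinite. -/

import Mathlib

open MeasureTheory

/-- Vertices of the square lattice `ℤ²`. -/
abbrev Vertex : Type := ℤ × ℤ

/-- Edges of `ℤ²`, encoded as a base vertex together with a direction:
`false` is the horizontal edge from `v` to `v + (1,0)`, `true` the vertical
edge from `v` to `v + (0,1)`. -/
abbrev Edge : Type := Vertex × Bool

/-- Percolation configurations `η : E(ℤ²) → {0,1}`. -/
abbrev Config : Type := Edge → Bool

/-- The displacement vector of an edge with direction `d`. -/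
def edgeDir (d : Bool) : Vertex := if d then (0, 1) else (1, 0)

/-- `joins e u v` says that the edge `e` has endpoints `u` and `v`. -/
def joins (e : Edge) (u v : Vertex) : Prop :=
  (e.1 = u ∧ u + edgeDir e.2 = v) ∨ (e.1 = v ∧ v + edgeDir e.2 = u)

/-- The open subgraph `G_η` of `ℤ²`: two vertices are adjacent iff some open
edge joins them. -/
def openGraph (η : Config) : SimpleGraph Vertex where
  Adj u v := u ≠ v ∧ ∃ e : Edge, η e = true ∧ joins e u v
  symm := by
    constructor
    rintro u v ⟨hne, e, he, hj⟩
    exact ⟨hne.symm, e, he, hj.symm⟩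
  loopless := by
    constructor
    rintro u ⟨hne, -⟩
    exact hne rfl

/-- The half-plane restriction `HP_b(G_η)`: keep only open edges with both
endpoints having second coordinate `≥ b`. -/
def hpGraph (b : ℤ) (η : Config) : SimpleGraph Vertex where
  Adj u v := b ≤ u.2 ∧ b ≤ v.2 ∧ (openGraph η).Adj u v
  symm := by
    constructor
    rintro u v ⟨hu, hv, h⟩
    exact ⟨hv, hu, h.symm⟩
  loopless := by
    constructor
    rintro u ⟨-, -, h⟩
    exact (openGraph η).loopless.irrefl u h

/-- `C` is a cluster (connected component) of `G_η`. -/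
def IsCluster (η : Config) (C : Set Vertex) : Prop :=
  ∃ v : Vertex, C = {u | (openGraph η).Reachable v u}

/-- `C` is a cluster of the half-plane restriction `HP_b(G_η)`: the component
of some vertex lying in the half-plane `{y ≥ b}`. -/
def IsClusterHP (b : ℤ) (η : Config) (C : Set Vertex) : Prop :=
  ∃ v : Vertex, b ≤ v.2 ∧ C = {u | (hpGraph b η).Reachable v u}

/-- The dual configuration `η*`: a dual edge is open iff the primal edge it
crosses is closed.  The dual edge with base `(a,c)` and direction `false`
(going to `(a+1,c)`) crosses the primal vertical edge `{(a+1,c),(a+1,c+1)}`;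
the dual edge with base `(a,c)` and direction `true` (going to `(a,c+1)`)
crosses the primal horizontal edge `{(a,c+1),(a+1,c+1)}`. -/
def dualConfig (η : Config) : Config := fun e =>
  if e.2 then !η ((e.1.1, e.1.2 + 1), false) else !η ((e.1.1 + 1, e.1.2), true)

/-- Translation of configurations: `(T_t η)(e) = η (e - t)`. -/
def shift (t : Vertex) (η : Config) : Config := fun e => η (e.1 - t, e.2)

namespace Stmt9


/-- The cluster (connected component) of `v`. -/
def comp (η : Config) (v : Vertex) : Set Vertex := {u | (openGraph η).Reachable v u}

/-- `v` lies in an infinite cluster bounded below. -/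
def Pprop (η : Config) (v : Vertex) : Prop :=
  (comp η v).Infinite ∧ BddBelow (Prod.snd '' comp η v)

/-- The event that some vertex lies in an infinite bounded-below cluster and
the minimal level over all such vertices is exactly `k`. -/
def Ek (k : ℤ) : Set Config :=
  {η | (∃ v : Vertex, Pprop η v ∧ v.2 = k) ∧ ∀ v : Vertex, Pprop η v → k ≤ v.2}

lemma adj_add (t : Vertex) (η : Config) {u v : Vertex}
    (h : (openGraph η).Adj u v) : (openGraph (shift t η)).Adj (u + t) (v + t) := by
  obtain ⟨hne, e, he, hj⟩ := h
  refine ⟨by simpa using hne, (e.1 + t, e.2), by simpa [shift] using he, ?_⟩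
  rcases hj with ⟨h1, h2⟩ | ⟨h1, h2⟩
  · exact Or.inl ⟨by rw [h1], by rw [← h2]; abel⟩
  · exact Or.inr ⟨by rw [h1], by rw [← h2]; abel⟩

lemma reach_add (t : Vertex) (η : Config) {u v : Vertex}
    (h : (openGraph η).Reachable v u) :
    (openGraph (shift t η)).Reachable (v + t) (u + t) := by
  rw [SimpleGraph.reachable_iff_reflTransGen] at h ⊢
  induction h with
  | refl => exact Relation.ReflTransGen.refl
  | tail _ hadj ih => exact ih.tail (adj_add t η hadj)

lemma shift_shift (t s : Vertex) (η : Config) : shift t (shift s η) = shift (s + t) η := by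
  funext e
  simp only [shift, sub_sub, add_comm t s]

lemma shift_zero (η : Config) : shift 0 η = η := by
  funext e
  simp [shift]

lemma reach_shift (t : Vertex) (η : Config) {u v : Vertex} :
    (openGraph (shift t η)).Reachable v u ↔ (openGraph η).Reachable (v - t) (u - t) := by
  constructor
  · intro h
    have := reach_add (-t) (shift t η) h
    rwa [shift_shift, add_neg_cancel, shift_zero, ← sub_eq_add_neg, ← sub_eq_add_neg] at this
  · intro h
    have := reach_add t η h
    rwa [sub_add_cancel, sub_add_cancel] at this

lemma comp_shift (t : Vertex) (η : Config) (v : Vertex) :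
    comp (shift t η) v = (fun u => u + t) '' comp η (v - t) := by
  ext u
  constructor
  · intro h
    exact ⟨u - t, (reach_shift t η).1 h, by simp⟩
  · rintro ⟨w, hw, rfl⟩
    exact (reach_shift t η).2 (by simpa [comp] using hw)

lemma bddBelow_image_add (c : ℤ) (A : Set ℤ) :
    BddBelow ((fun x => x + c) '' A) ↔ BddBelow A := by
  constructor
  · rintro ⟨b, hb⟩
    refine ⟨b - c, fun x hx => ?_⟩
    have := hb (Set.mem_image_of_mem _ hx)
    omega
  · rintro ⟨b, hb⟩
    refine ⟨b + c, ?_⟩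
    rintro y ⟨x, hx, rfl⟩
    exact (by have := hb hx; show b + c ≤ x + c; omega)

lemma Pprop_shift (t : Vertex) (η : Config) (v : Vertex) :
    Pprop (shift t η) v ↔ Pprop η (v - t) := by
  unfold Pprop
  rw [comp_shift]
  have hinj : Set.InjOn (fun u : Vertex => u + t) (comp η (v - t)) :=
    (add_left_injective t).injOn
  rw [Set.infinite_image_iff hinj]
  have himg : Prod.snd '' ((fun u : Vertex => u + t) '' comp η (v - t))
      = (fun x => x + t.2) '' (Prod.snd '' comp η (v - t)) := by
    rw [Set.image_image, Set.image_image]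
    rfl
  rw [himg, bddBelow_image_add]

lemma Ek_preimage (t : Vertex) (k : ℤ) : (shift t) ⁻¹' (Ek k) = Ek (k - t.2) := by
  ext η
  simp only [Ek, Set.mem_preimage, Set.mem_setOf_eq]
  constructor
  · rintro ⟨⟨v, hv, hv2⟩, hall⟩
    rw [Pprop_shift] at hv
    refine ⟨⟨v - t, hv, by simp [Prod.snd_sub]; omega⟩, fun w hw => ?_⟩
    have := hall (w + t) (by rw [Pprop_shift]; simpa using hw)
    simp at this; omega
  · rintro ⟨⟨v, hv, hv2⟩, hall⟩
    refine ⟨⟨v + t, by rw [Pprop_shift]; simpa using hv, by simp; omega⟩, fun w hw => ?_⟩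
    rw [Pprop_shift] at hw
    have := hall (w - t) hw
    simp [Prod.snd_sub] at this; omega

lemma measurableSet_adj (u v : Vertex) :
    MeasurableSet {η : Config | (openGraph η).Adj u v} := by
  by_cases h : u = v
  · have : {η : Config | (openGraph η).Adj u v} = ∅ := by
      ext η; simp [openGraph, h]
    rw [this]; exact MeasurableSet.empty
  · have : {η : Config | (openGraph η).Adj u v}
        = ⋃ (e : Edge) (_ : joins e u v), {η : Config | η e = true} := by
      ext η
      simp only [openGraph, Set.mem_setOf_eq, Set.mem_iUnion]
      constructor
      · rintro ⟨-, e, he, hj⟩; exact ⟨e, hj, he⟩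
      · rintro ⟨e, hj, he⟩; exact ⟨h, e, he, hj⟩
    rw [this]
    refine MeasurableSet.iUnion fun e => MeasurableSet.iUnion fun _ => ?_
    have he : {η : Config | η e = true} = (fun η : Config => η e) ⁻¹' {true} := by
      ext η; simp
    rw [he]
    exact (measurable_pi_apply e) (measurableSet_singleton true)

/-- The event that the vertex list `v :: l` is a chain in `openGraph η`. -/
def chainSet : Vertex → List Vertex → Set Config
  | _, [] => Set.univ
  | v, w :: l => {η | (openGraph η).Adj v w} ∩ chainSet w l

lemma measurableSet_chainSet (v : Vertex) (l : List Vertex) :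
    MeasurableSet (chainSet v l) := by
  induction l generalizing v with
  | nil => exact MeasurableSet.univ
  | cons w l ih => exact (measurableSet_adj v w).inter (ih w)

lemma mem_chainSet (η : Config) (v : Vertex) (l : List Vertex) :
    η ∈ chainSet v l ↔ List.Chain (openGraph η).Adj v l := by
  induction l generalizing v with
  | nil => simp [chainSet, List.Chain]
  | cons w l ih => simp [chainSet, List.Chain, ih, Set.mem_setOf_eq, Set.mem_inter_iff]

lemma measurableSet_reach (v u : Vertex) :
    MeasurableSet {η : Config | (openGraph η).Reachable v u} := by
  have : {η : Config | (openGraph η).Reachable v u}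
      = ⋃ (l : List Vertex) (_ : (v :: l).getLast (List.cons_ne_nil v l) = u),
          chainSet v l := by
    ext η
    simp only [Set.mem_setOf_eq, Set.mem_iUnion]
    rw [SimpleGraph.reachable_iff_reflTransGen]
    constructor
    · intro h
      obtain ⟨l, hc, hl⟩ := List.exists_isChain_cons_of_relationReflTransGen h
      exact ⟨l, hl, (mem_chainSet η v l).2 hc⟩
    · rintro ⟨l, hl, hc⟩
      exact List.relationReflTransGen_of_exists_isChain_cons l ((mem_chainSet η v l).1 hc) hl
  rw [this]
  exact MeasurableSet.iUnion fun l => MeasurableSet.iUnion fun _ =>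
    measurableSet_chainSet v l

lemma measurableSet_Pprop (v : Vertex) :
    MeasurableSet {η : Config | Pprop η v} := by
  have h1 : {η : Config | (comp η v).Infinite}
      = ⋂ (F : Finset Vertex), ⋃ (u : Vertex) (_ : u ∉ F),
          {η : Config | (openGraph η).Reachable v u} := by
    ext η
    simp only [Set.mem_iInter, Set.mem_iUnion, Set.mem_setOf_eq]
    constructor
    · intro h F
      obtain ⟨u, hu, hnF⟩ := h.exists_notMem_finset F
      exact ⟨u, hnF, hu⟩
    · intro h
      by_contra hfin
      rw [Set.not_infinite] at hfin
      obtain ⟨u, hnF, hu⟩ := h hfin.toFinset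
      exact hnF (hfin.mem_toFinset.2 hu)
  have h2 : {η : Config | BddBelow (Prod.snd '' comp η v)}
      = ⋃ (b : ℤ), ⋂ (u : Vertex),
          {η : Config | (openGraph η).Reachable v u → b ≤ u.2} := by
    ext η
    simp only [Set.mem_iUnion, Set.mem_iInter, Set.mem_setOf_eq]
    constructor
    · rintro ⟨b, hb⟩
      exact ⟨b, fun u hu => hb (Set.mem_image_of_mem _ hu)⟩
    · rintro ⟨b, hb⟩
      refine ⟨b, ?_⟩
      rintro y ⟨u, hu, rfl⟩
      exact hb u hu
  have hPset : {η : Config | Pprop η v}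
      = {η : Config | (comp η v).Infinite} ∩ {η : Config | BddBelow (Prod.snd '' comp η v)} :=
    rfl
  rw [hPset, h1, h2]
  refine MeasurableSet.inter ?_ ?_
  · exact MeasurableSet.iInter fun F => MeasurableSet.iUnion fun u =>
      MeasurableSet.iUnion fun _ => measurableSet_reach v u
  · refine MeasurableSet.iUnion fun b => MeasurableSet.iInter fun u => ?_
    by_cases hbu : b ≤ u.2
    · have : {η : Config | (openGraph η).Reachable v u → b ≤ u.2} = Set.univ := by
        ext η; simp [hbu]
      rw [this]; exact MeasurableSet.univ
    · have : {η : Config | (openGraph η).Reachable v u → b ≤ u.2}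
          = {η : Config | (openGraph η).Reachable v u}ᶜ := by
        ext η; simp [hbu]
      rw [this]; exact (measurableSet_reach v u).compl

lemma measurableSet_Ek (k : ℤ) : MeasurableSet (Ek k) := by
  have : Ek k = (⋃ (v : Vertex) (_ : v.2 = k), {η : Config | Pprop η v})
      ∩ ⋂ (v : Vertex), {η : Config | Pprop η v → k ≤ v.2} := by
    ext η
    simp only [Ek, Set.mem_inter_iff, Set.mem_iUnion, Set.mem_iInter, Set.mem_setOf_eq]
    constructor
    · rintro ⟨⟨v, hv, hk⟩, hall⟩
      exact ⟨⟨v, hk, hv⟩, hall⟩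
    · rintro ⟨⟨v, hk, hv⟩, hall⟩
      exact ⟨⟨v, hv, hk⟩, hall⟩
  rw [this]
  refine MeasurableSet.inter ?_ ?_
  · exact MeasurableSet.iUnion fun v => MeasurableSet.iUnion fun _ => measurableSet_Pprop v
  · refine MeasurableSet.iInter fun v => ?_
    by_cases hkv : k ≤ v.2
    · have : {η : Config | Pprop η v → k ≤ v.2} = Set.univ := by
        ext η; simp [hkv]
      rw [this]; exact MeasurableSet.univ
    · have : {η : Config | Pprop η v → k ≤ v.2} = {η : Config | Pprop η v}ᶜ := by
        ext η; simp [hkv]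
      rw [this]; exact (measurableSet_Pprop v).compl

lemma comp_eq_of_mem (η : Config) {v w : Vertex} (h : v ∈ comp η w) :
    comp η v = comp η w := by
  ext u
  exact ⟨fun hu => h.trans hu, fun hu => h.symm.trans hu⟩

/-- The combinatorial core: if the set of infinite bounded-below clusters is
nonempty and finite, then the configuration lies in some `Ek k`. -/
lemma mem_iUnion_Ek (η : Config)
    (hne : {C : Set Vertex | IsCluster η C ∧ C.Infinite ∧ BddBelow (Prod.snd '' C)}.Nonempty)
    (hfin : {C : Set Vertex | IsCluster η C ∧ C.Infinite ∧ BddBelow (Prod.snd '' C)}.Finite) :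
    η ∈ ⋃ (k : ℤ), Ek k := by
  set S := {C : Set Vertex | IsCluster η C ∧ C.Infinite ∧ BddBelow (Prod.snd '' C)} with hS
  set Q := {v : Vertex | Pprop η v} with hQ
  have hQ_eq : Q = ⋃ C ∈ S, C := by
    ext v
    simp only [hQ, Set.mem_setOf_eq, Set.mem_iUnion]
    constructor
    · intro hv
      exact ⟨comp η v, ⟨⟨v, rfl⟩, hv.1, hv.2⟩, SimpleGraph.Reachable.refl v⟩
    · rintro ⟨C, ⟨⟨w, rfl⟩, hCinf, hCbdd⟩, hvC⟩
      have hcomp : comp η v = comp η w := comp_eq_of_mem η hvC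
      exact ⟨by rw [hcomp]; exact hCinf, by rw [hcomp]; exact hCbdd⟩
  have hQne : Q.Nonempty := by
    obtain ⟨C, hC⟩ := hne
    obtain ⟨v, hv⟩ := hC.2.1.nonempty
    rw [hQ_eq]
    exact ⟨v, Set.mem_biUnion hC hv⟩
  have hQbdd : BddBelow (Prod.snd '' Q) := by
    rw [hQ_eq, Set.image_iUnion₂]
    rw [Set.Finite.bddBelow_biUnion hfin]
    intro C hC
    exact hC.2.2
  have himg_ne : (Prod.snd '' Q).Nonempty := hQne.image _
  have hmem := Int.csInf_mem himg_ne hQbdd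
  obtain ⟨v, hvQ, hv2⟩ := hmem
  refine Set.mem_iUnion.2 ⟨sInf (Prod.snd '' Q), ⟨v, hvQ, hv2⟩, ?_⟩
  intro w hw
  exact csInf_le hQbdd (Set.mem_image_of_mem _ hw)

end Stmt9

/-- For a translation-invariant percolation on `ℤ²`, almost
surely the collection of infinite clusters of `G_η` whose vertex sets have
second coordinates bounded below is empty or infinite. -/
theorem bounded_below_infinite_clusters_zero_or_infinite
    (μ : Measure Config) [IsProbabilityMeasure μ]
    (hinv : ∀ t : Vertex, MeasurePreserving (shift t) μ μ) :
    ∀ᵐ η ∂μ,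
      {C : Set Vertex | IsCluster η C ∧ C.Infinite ∧ BddBelow (Prod.snd '' C)} = ∅ ∨
      {C : Set Vertex | IsCluster η C ∧ C.Infinite ∧ BddBelow (Prod.snd '' C)}.Infinite := by


  classical
  rw [MeasureTheory.ae_iff]
  have hsub : {η : Config | ¬({C : Set Vertex | IsCluster η C ∧ C.Infinite ∧
        BddBelow (Prod.snd '' C)} = ∅ ∨
      {C : Set Vertex | IsCluster η C ∧ C.Infinite ∧ BddBelow (Prod.snd '' C)}.Infinite)}
      ⊆ ⋃ (k : ℤ), Stmt9.Ek k := by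
    intro η hη
    simp only [Set.mem_setOf_eq] at hη
    push_neg at hη
    obtain ⟨hne, hfin⟩ := hη
    exact Stmt9.mem_iUnion_Ek η hne hfin
  refine measure_mono_null hsub ?_
  have hdisj : Pairwise (Function.onFun Disjoint Stmt9.Ek) := by
    intro k k' hkk'
    rw [Function.onFun, Set.disjoint_left]
    intro η hk hk'
    obtain ⟨⟨v, hv, hv2⟩, hall⟩ := hk
    obtain ⟨⟨w, hw, hw2⟩, hall'⟩ := hk'
    have h1 : k' ≤ v.2 := hall' v hv
    have h2 : k ≤ w.2 := hall w hw
    omega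
  have hsum := MeasureTheory.measure_iUnion (μ := μ) hdisj
    (fun k => Stmt9.measurableSet_Ek k)
  have hconst : ∀ k : ℤ, μ (Stmt9.Ek k) = μ (Stmt9.Ek 0) := by
    intro k
    have hp := (hinv ((0 : ℤ), k)).measure_preimage
      (Stmt9.measurableSet_Ek k).nullMeasurableSet
    rw [Stmt9.Ek_preimage] at hp
    simpa using hp.symm
  have hzero : μ (Stmt9.Ek 0) = 0 := by
    by_contra hc
    have htop : ∑' (_ : ℤ), μ (Stmt9.Ek 0) = ⊤ :=
      ENNReal.tsum_const_eq_top_of_ne_zero hc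
    have hle : μ (⋃ k, Stmt9.Ek k) ≤ 1 := prob_le_one
    rw [hsum] at hle
    simp only [hconst] at hle
    rw [htop] at hle
    exact (lt_irrefl _ (lt_of_le_of_lt hle (by norm_num))).elim
  rw [hsum]
  simp [hconst, hzero]
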